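/- arXiv:2308.15181 — 2 statements merged into one kernel-verified Lean document; each statement's English description precedes it below -/
import Mathlib

section
/- For probability measures $\mu,\nu$ on a Polish space $E$ with finite second moments, and for any $1\le k\le N$, if $\mu^{(N)},\nu^{(N)}$ are exchangeable probability measures on $E^N$ with marginals onto the first $k$ coordinates $\mu^{(k)},\nu^{(k)}$ respectively, then $\mathbb{W}_2(\mu^{(k)},\nu^{(k)})^2\le \frac{k}{N}\,\mathbb{W}_2(\mu^{(N)},\nu^{(N)})^2$, where the Wasserstein distances on product spaces are taken with respect to the $\ell^2$-sum of the metric on each coordinate. -/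
open MeasureTheory ENNReal

/-- The squared `L²`-Wasserstein "distance" associated to a cost `d`, defined as the infimum
over all couplings of the integral of the squared cost. -/
noncomputable def W2sq {α : Type*} [MeasurableSpace α] (d : α → α → ℝ)
    (μ ν : Measure α) : ℝ≥0∞ :=
  ⨅ π : {π : Measure (α × α) // π.map Prod.fst = μ ∧ π.map Prod.snd = ν},
    ∫⁻ p, ENNReal.ofReal (d p.1 p.2) ^ 2 ∂(π.1)

lemma sq_ofReal_sqrt {s : ℝ} (hs : 0 ≤ s) :
    ENNReal.ofReal (Real.sqrt s) ^ 2 = ENNReal.ofReal s := by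
  rw [← ENNReal.ofReal_pow (Real.sqrt_nonneg s), Real.sq_sqrt hs]

lemma W2sq_sqrt_sum {E : Type*} [MetricSpace E] [MeasurableSpace E] {n : ℕ}
    (μ ν : Measure (Fin n → E)) :
    W2sq (fun ξ η : Fin n → E => Real.sqrt (∑ i, dist (ξ i) (η i) ^ 2)) μ ν =
      ⨅ π : {π : Measure ((Fin n → E) × (Fin n → E)) //
          π.map Prod.fst = μ ∧ π.map Prod.snd = ν},
        ∫⁻ p, ∑ i, ENNReal.ofReal (dist (p.1 i) (p.2 i) ^ 2) ∂(π.1) := by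
  refine iInf_congr fun π => lintegral_congr fun p => ?_
  rw [sq_ofReal_sqrt (Finset.sum_nonneg fun i _ => sq_nonneg _),
    ENNReal.ofReal_sum_of_nonneg fun i _ => sq_nonneg _]

/-- For exchangeable measures `μN, νN` on `E^N` with finite second moments, the `k`-marginals
satisfy `W₂(μ^{(k)}, ν^{(k)})² ≤ (k/N) ⬝ W₂(μ^{(N)}, ν^{(N)})²`, where the product spaces carry
the ℓ²-sum metric. -/
theorem stmt2 {E : Type*} [MetricSpace E] [PolishSpace E] [MeasurableSpace E] [BorelSpace E]
    (o : E) (N k : ℕ) (hk : 1 ≤ k) (hkN : k ≤ N)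
    (μN νN : Measure (Fin N → E)) [IsProbabilityMeasure μN] [IsProbabilityMeasure νN]
    (hμ2 : ∫⁻ x, ENNReal.ofReal (∑ i, dist o (x i) ^ 2) ∂μN ≠ ⊤)
    (hν2 : ∫⁻ x, ENNReal.ofReal (∑ i, dist o (x i) ^ 2) ∂νN ≠ ⊤)
    (hexμ : ∀ σ : Equiv.Perm (Fin N), μN.map (fun x => x ∘ σ) = μN)
    (hexν : ∀ σ : Equiv.Perm (Fin N), νN.map (fun x => x ∘ σ) = νN) :
    W2sq (fun ξ η : Fin k → E => Real.sqrt (∑ i, dist (ξ i) (η i) ^ 2))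
        (μN.map (fun x => fun i : Fin k => x (Fin.castLE hkN i)))
        (νN.map (fun x => fun i : Fin k => x (Fin.castLE hkN i)))
      ≤ ((k : ℝ≥0∞) / (N : ℝ≥0∞)) *
        W2sq (fun ξ η : Fin N → E => Real.sqrt (∑ i, dist (ξ i) (η i) ^ 2)) μN νN := by
  haveI : NeZero N := ⟨by omega⟩
  have hN0 : (N : ℝ≥0∞) ≠ 0 := Nat.cast_ne_zero.mpr (NeZero.ne N)
  have hNt : (N : ℝ≥0∞) ≠ ⊤ := ENNReal.natCast_ne_top N
  -- the projection to the first k coordinates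
  set proj : (Fin N → E) → (Fin k → E) := fun x i => x (Fin.castLE hkN i) with hprojdef
  have hproj : Measurable proj := measurable_pi_lambda _ fun i => measurable_pi_apply _
  -- the cyclic shifts
  set T : Fin N → (Fin N → E) → (Fin N → E) :=
    fun m x => x ∘ (Equiv.addLeft m : Equiv.Perm (Fin N)) with hTdef
  have hT : ∀ m, Measurable (T m) :=
    fun m => measurable_pi_lambda _ fun i => measurable_pi_apply _
  set F : Fin N → ((Fin N → E) × (Fin N → E)) → ((Fin k → E) × (Fin k → E)) :=
    fun m p => (proj (T m p.1), proj (T m p.2)) with hFdef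
  have hF : ∀ m, Measurable (F m) := fun m =>
    ((hproj.comp (hT m)).comp measurable_fst).prodMk ((hproj.comp (hT m)).comp measurable_snd)
  -- cost functions
  set gN : ((Fin N → E) × (Fin N → E)) → ℝ≥0∞ :=
    fun p => ∑ j, ENNReal.ofReal (dist (p.1 j) (p.2 j) ^ 2) with hgNdef
  have hgN : Measurable gN := Finset.measurable_sum _ fun j _ =>
    (((measurable_pi_apply j).comp measurable_fst).dist
      ((measurable_pi_apply j).comp measurable_snd)).pow_const 2 |>.ennreal_ofReal
  set gk : ((Fin k → E) × (Fin k → E)) → ℝ≥0∞ :=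
    fun q => ∑ i, ENNReal.ofReal (dist (q.1 i) (q.2 i) ^ 2) with hgkdef
  have hgk : Measurable gk := Finset.measurable_sum _ fun i _ =>
    (((measurable_pi_apply i).comp measurable_fst).dist
      ((measurable_pi_apply i).comp measurable_snd)).pow_const 2 |>.ennreal_ofReal
  rw [W2sq_sqrt_sum, W2sq_sqrt_sum,
    ENNReal.mul_iInf_of_ne (by simp [ENNReal.div_eq_top, hN0, hNt]; omega)
      (by simp [ENNReal.div_eq_top, hN0, hNt])]
  refine le_iInf fun π => ?_
  obtain ⟨π, hπ1, hπ2⟩ := π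
  -- the symmetrized coupling of the k-marginals
  set πk : Measure ((Fin k → E) × (Fin k → E)) :=
    (N : ℝ≥0∞)⁻¹ • ∑ m : Fin N, π.map (F m) with hπkdef
  have hmarg : ∀ (ρ : Measure (Fin N → E)),
      (∀ σ : Equiv.Perm (Fin N), ρ.map (fun x => x ∘ σ) = ρ) →
      ∀ m : Fin N, ρ.map (proj ∘ T m) = ρ.map proj := by
    intro ρ hex m
    rw [← Measure.map_map hproj (hT m)]
    congr 1
    exact hex (Equiv.addLeft m)
  have h1 : ∀ m : Fin N, (π.map (F m)).map Prod.fst = μN.map proj := by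
    intro m
    rw [Measure.map_map measurable_fst (hF m),
      show Prod.fst ∘ F m = (proj ∘ T m) ∘ Prod.fst from rfl,
      ← Measure.map_map ((hproj.comp (hT m)) : Measurable (proj ∘ T m)) measurable_fst, hπ1]
    exact hmarg μN hexμ m
  have h2 : ∀ m : Fin N, (π.map (F m)).map Prod.snd = νN.map proj := by
    intro m
    rw [Measure.map_map measurable_snd (hF m),
      show Prod.snd ∘ F m = (proj ∘ T m) ∘ Prod.snd from rfl,
      ← Measure.map_map ((hproj.comp (hT m)) : Measurable (proj ∘ T m)) measurable_snd, hπ2]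
    exact hmarg νN hexν m
  have hcomb : ∀ (f : ((Fin k → E) × (Fin k → E)) → (Fin k → E)), Measurable f →
      (∀ m : Fin N, (π.map (F m)).map f = μN.map proj) → πk.map f = μN.map proj := by
    intro f hf hall
    ext s hs
    rw [Measure.map_apply hf hs]
    simp only [hπkdef, Measure.smul_apply, Measure.coe_finset_sum, Finset.sum_apply,
      smul_eq_mul]
    have : ∀ m : Fin N, π.map (F m) (f ⁻¹' s) = μN.map proj s := fun m => by
      rw [← Measure.map_apply hf hs, hall m]
    rw [Finset.sum_congr rfl fun m _ => this m, Finset.sum_const, Finset.card_univ,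
      Fintype.card_fin, nsmul_eq_mul, ← mul_assoc, ENNReal.inv_mul_cancel hN0 hNt, one_mul]
  have hfst : πk.map Prod.fst = μN.map proj := hcomb _ measurable_fst h1
  have hsnd : πk.map Prod.snd = νN.map proj := by
    -- same argument with snd
    ext s hs
    rw [Measure.map_apply measurable_snd hs]
    simp only [hπkdef, Measure.smul_apply, Measure.coe_finset_sum, Finset.sum_apply,
      smul_eq_mul]
    have : ∀ m : Fin N, π.map (F m) (Prod.snd ⁻¹' s) = νN.map proj s := fun m => by
      rw [← Measure.map_apply measurable_snd hs, h2 m]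
    rw [Finset.sum_congr rfl fun m _ => this m, Finset.sum_const, Finset.card_univ,
      Fintype.card_fin, nsmul_eq_mul, ← mul_assoc, ENNReal.inv_mul_cancel hN0 hNt, one_mul]
  -- the cost of πk
  have hpt : ∀ p : ((Fin N → E) × (Fin N → E)),
      ∑ m : Fin N, gk (F m p) = (k : ℝ≥0∞) * gN p := by
    intro p
    have : ∀ m : Fin N, gk (F m p) =
        ∑ i : Fin k, ENNReal.ofReal
          (dist (p.1 (m + Fin.castLE hkN i)) (p.2 (m + Fin.castLE hkN i)) ^ 2) := by
      intro m
      simp [hgkdef, hFdef, hprojdef, hTdef]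
    rw [Finset.sum_congr rfl fun m _ => this m, Finset.sum_comm]
    have hinner : ∀ i : Fin k,
        (∑ m : Fin N, ENNReal.ofReal
          (dist (p.1 (m + Fin.castLE hkN i)) (p.2 (m + Fin.castLE hkN i)) ^ 2)) = gN p := by
      intro i
      exact Equiv.sum_comp (Equiv.addRight (Fin.castLE hkN i))
        (fun j => ENNReal.ofReal (dist (p.1 j) (p.2 j) ^ 2))
    rw [Finset.sum_congr rfl fun i _ => hinner i, Finset.sum_const, Finset.card_univ,
      Fintype.card_fin, nsmul_eq_mul]
  have hcost : ∫⁻ q, gk q ∂πk = ((k : ℝ≥0∞) / (N : ℝ≥0∞)) * ∫⁻ p, gN p ∂π := by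
    rw [hπkdef, lintegral_smul_measure, lintegral_finset_sum_measure]
    have : ∀ m : Fin N, ∫⁻ q, gk q ∂(π.map (F m)) = ∫⁻ p, gk (F m p) ∂π := fun m =>
      lintegral_map hgk (hF m)
    rw [Finset.sum_congr rfl fun m _ => this m,
      ← lintegral_finset_sum (f := fun m p => gk (F m p)) Finset.univ
        (fun m _ => hgk.comp (hF m)),
      lintegral_congr hpt, lintegral_const_mul _ hgN, ENNReal.div_eq_inv_mul, mul_assoc, smul_eq_mul]
  calc (⨅ π : {π : Measure ((Fin k → E) × (Fin k → E)) //
          π.map Prod.fst = μN.map (fun x => fun i : Fin k => x (Fin.castLE hkN i)) ∧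
          π.map Prod.snd = νN.map (fun x => fun i : Fin k => x (Fin.castLE hkN i))},
        ∫⁻ p, ∑ i, ENNReal.ofReal (dist (p.1 i) (p.2 i) ^ 2) ∂(π.1))
      ≤ ∫⁻ q, gk q ∂πk := iInf_le_of_le ⟨πk, hfst, hsnd⟩ le_rfl
    _ = ((k : ℝ≥0∞) / (N : ℝ≥0∞)) * ∫⁻ p, gN p ∂π := hcost
end

section
/- Conversely to the previous statement: if $\mu,\nu$ are probability measures such that $(\nu(F))^p\le\mu(F^p)e^{C}$ for all bounded measurable $F\ge0$ and some $p>1$, $C\ge0$, then $\nu\ll\mu$ and $\int(\frac{d\nu}{d\mu})^{p/(p-1)}d\mu\le e^{C/(p-1)}$. -/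
open MeasureTheory ENNReal

private lemma real_aux13 {a p C : ℝ} (ha : 0 ≤ a) (hp : 1 < p)
    (h : a ^ p ≤ a * Real.exp C) : a ≤ Real.exp (C / (p - 1)) := by
  rcases ha.eq_or_lt with h0 | h0
  · rw [← h0]; positivity
  have hp1 : 0 < p - 1 := by linarith
  have key : a ^ (p - 1) ≤ Real.exp C := by
    have e : a ^ p = a * a ^ (p - 1) := by
      nth_rewrite 2 [← Real.rpow_one a]
      rw [← Real.rpow_add h0]
      norm_num
    rw [e] at h
    exact le_of_mul_le_mul_left h h0
  calc a = (a ^ (p - 1)) ^ (1 / (p - 1)) := by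
        rw [← Real.rpow_mul ha, mul_one_div, div_self hp1.ne', Real.rpow_one]
    _ ≤ (Real.exp C) ^ (1 / (p - 1)) :=
        Real.rpow_le_rpow (by positivity) key (by positivity)
    _ = Real.exp (C / (p - 1)) := by rw [← Real.exp_mul, mul_one_div]

/-- Converse direction: the Harnack-type inequality with power `p`,
`(ν(F))^p ≤ μ(F^p) e^C` for all bounded measurable `F ≥ 0`, implies `ν ≪ μ` and the
reverse-Hölder bound `∫ (dν/dμ)^{p/(p-1)} dμ ≤ e^{C/(p-1)}`. -/
theorem stmt13 {α : Type*} [MeasurableSpace α] (μ ν : Measure α)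
    [IsProbabilityMeasure μ] [IsProbabilityMeasure ν]
    (p C : ℝ) (hp : 1 < p) (hC : 0 ≤ C)
    (hH : ∀ F : α → ℝ, Measurable F → (∀ x, 0 ≤ F x) → (∃ M, ∀ x, F x ≤ M) →
      (∫ x, F x ∂ν) ^ p ≤ (∫ x, F x ^ p ∂μ) * Real.exp C) :
    ν ≪ μ ∧
      ∫⁻ x, (ν.rnDeriv μ x) ^ (p / (p - 1)) ∂μ ≤ ENNReal.ofReal (Real.exp (C / (p - 1))) := by
  have hppos : 0 < p := by linarith
  have hp1 : 0 < p - 1 := by linarith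
  -- Step 1: absolute continuity
  have hac : ν ≪ μ := by
    refine Measure.AbsolutelyContinuous.mk fun s hs hμs => ?_
    set F : α → ℝ := s.indicator 1 with hF
    have hFm : Measurable F := measurable_one.indicator hs
    have hF0 : ∀ x, 0 ≤ F x := fun x => Set.indicator_nonneg (fun _ _ => zero_le_one) x
    have hFb : ∃ M, ∀ x, F x ≤ M := ⟨1, fun x => by
      by_cases hx : x ∈ s <;> simp [hF, hx]⟩
    have hFp : ∀ x, F x ^ p = F x := by
      intro x
      by_cases hx : x ∈ s <;>
        simp [hF, hx, Real.zero_rpow hppos.ne', Real.one_rpow]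
    have h := hH F hFm hF0 hFb
    rw [show (∫ x, F x ^ p ∂μ) = ∫ x, F x ∂μ from by simp_rw [hFp]] at h
    rw [hF, integral_indicator_one hs, integral_indicator_one hs, measureReal_def, measureReal_def, hμs] at h
    simp only [ENNReal.toReal_zero, zero_mul] at h
    have h0 : (ν s).toReal ^ p = 0 :=
      le_antisymm h (Real.rpow_nonneg ENNReal.toReal_nonneg p)
    rw [Real.rpow_eq_zero ENNReal.toReal_nonneg hppos.ne'] at h0
    rwa [ENNReal.toReal_eq_zero_iff, or_iff_left (measure_ne_top ν s)] at h0
  refine ⟨hac, ?_⟩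
  -- Step 2: reverse Hölder bound
  set f := ν.rnDeriv μ with hfdef
  have hfm : Measurable f := Measure.measurable_rnDeriv ν μ
  set q := p / (p - 1) with hqdef
  set r := 1 / (p - 1) with hrdef
  have hr : 0 < r := by positivity
  have hqpos : 0 < q := by positivity
  have hq_eq : q = r + 1 := by rw [hqdef, hrdef, div_add_one hp1.ne']; ring
  have hpr : r * p = q := by rw [hqdef, hrdef]; field_simp
  have hgm : ∀ n : ℕ, Measurable fun x => min (f x) (n : ℝ≥0∞) :=
    fun n => hfm.min measurable_const
  have hgmr : ∀ n : ℕ, Measurable fun x => (min (f x) (n : ℝ≥0∞)) ^ r :=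
    fun n => ENNReal.continuous_rpow_const.measurable.comp (hgm n)
  have hgmq : ∀ n : ℕ, Measurable fun x => (min (f x) (n : ℝ≥0∞)) ^ q :=
    fun n => ENNReal.continuous_rpow_const.measurable.comp (hgm n)
  have hAn : ∀ n : ℕ, ∫⁻ x, (min (f x) (n : ℝ≥0∞)) ^ q ∂μ
      ≤ ENNReal.ofReal (Real.exp (C / (p - 1))) := by
    intro n
    set A := ∫⁻ x, (min (f x) (n : ℝ≥0∞)) ^ q ∂μ with hA
    set B := ∫⁻ x, (min (f x) (n : ℝ≥0∞)) ^ r ∂ν with hB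
    have hntop : ((n : ℝ≥0∞)) ≠ ∞ := ENNReal.natCast_ne_top n
    have hAfin : A ≠ ∞ := by
      refine ne_top_of_le_ne_top (b := (n : ℝ≥0∞) ^ q * 1) ?_ ?_
      · exact ENNReal.mul_ne_top (ENNReal.rpow_ne_top_of_nonneg hqpos.le hntop) one_ne_top
      · calc A ≤ ∫⁻ _, (n : ℝ≥0∞) ^ q ∂μ :=
              lintegral_mono fun x => ENNReal.rpow_le_rpow (min_le_right _ _) hqpos.le
          _ = (n : ℝ≥0∞) ^ q * 1 := by simp
    have hBfin : B ≠ ∞ := by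
      refine ne_top_of_le_ne_top (b := (n : ℝ≥0∞) ^ r * 1) ?_ ?_
      · exact ENNReal.mul_ne_top (ENNReal.rpow_ne_top_of_nonneg hr.le hntop) one_ne_top
      · calc B ≤ ∫⁻ _, (n : ℝ≥0∞) ^ r ∂ν :=
              lintegral_mono fun x => ENNReal.rpow_le_rpow (min_le_right _ _) hr.le
          _ = (n : ℝ≥0∞) ^ r * 1 := by simp
    -- pointwise finiteness
    have hfinr : ∀ x, (min (f x) (n : ℝ≥0∞)) ^ r < ∞ := fun x =>
      lt_of_le_of_lt (ENNReal.rpow_le_rpow (min_le_right _ _) hr.le)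
        (ENNReal.rpow_lt_top_of_nonneg hr.le hntop)
    have hfinq : ∀ x, (min (f x) (n : ℝ≥0∞)) ^ q < ∞ := fun x =>
      lt_of_le_of_lt (ENNReal.rpow_le_rpow (min_le_right _ _) hqpos.le)
        (ENNReal.rpow_lt_top_of_nonneg hqpos.le hntop)
    set F : α → ℝ := fun x => ((min (f x) (n : ℝ≥0∞)) ^ r).toReal with hFdef
    have hFm : Measurable F := (hgmr n).ennreal_toReal
    have hF0 : ∀ x, 0 ≤ F x := fun x => ENNReal.toReal_nonneg
    have hFb : ∃ M, ∀ x, F x ≤ M := by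
      refine ⟨((n : ℝ≥0∞) ^ r).toReal, fun x => ?_⟩
      exact ENNReal.toReal_mono (ENNReal.rpow_ne_top_of_nonneg hr.le hntop)
        (ENNReal.rpow_le_rpow (min_le_right _ _) hr.le)
    have hInu : ∫ x, F x ∂ν = B.toReal := by
      rw [hFdef, hB]
      exact integral_toReal (hgmr n).aemeasurable (ae_of_all _ hfinr)
    have hImu : ∫ x, F x ^ p ∂μ = A.toReal := by
      have : ∀ x, F x ^ p = ((min (f x) (n : ℝ≥0∞)) ^ q).toReal := by
        intro x
        rw [hFdef, ENNReal.toReal_rpow, ← ENNReal.rpow_mul, hpr]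
      simp_rw [this, hA]
      exact integral_toReal (hgmq n).aemeasurable (ae_of_all _ hfinq)
    have hAB : A ≤ B := by
      have step : A ≤ ∫⁻ x, f x * (min (f x) (n : ℝ≥0∞)) ^ r ∂μ := by
        refine lintegral_mono fun x => ?_
        calc (min (f x) (n : ℝ≥0∞)) ^ q
            = min (f x) (n : ℝ≥0∞) * (min (f x) (n : ℝ≥0∞)) ^ r := by
              rw [hq_eq, ENNReal.rpow_add_of_nonneg _ _ hr.le zero_le_one, ENNReal.rpow_one,
                mul_comm]
          _ ≤ f x * (min (f x) (n : ℝ≥0∞)) ^ r :=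
              by gcongr; exact min_le_left _ _
      have heq : ∫⁻ x, f x * (min (f x) (n : ℝ≥0∞)) ^ r ∂μ = B :=
        lintegral_rnDeriv_mul hac (hgmr n).aemeasurable
      exact heq ▸ step
    have hkey := hH F hFm hF0 hFb
    rw [hInu, hImu] at hkey
    have h1 : A.toReal ^ p ≤ A.toReal * Real.exp C := by
      refine le_trans ?_ hkey
      exact Real.rpow_le_rpow ENNReal.toReal_nonneg
        ((ENNReal.toReal_le_toReal hAfin hBfin).2 hAB) hppos.le
    have h2 : A.toReal ≤ Real.exp (C / (p - 1)) :=
      real_aux13 ENNReal.toReal_nonneg hp h1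
    calc A = ENNReal.ofReal A.toReal := (ENNReal.ofReal_toReal hAfin).symm
      _ ≤ ENNReal.ofReal (Real.exp (C / (p - 1))) := ENNReal.ofReal_le_ofReal h2
  -- Step 3: monotone convergence
  have hmono : Monotone fun (n : ℕ) => fun x => (min (f x) (n : ℝ≥0∞)) ^ q := by
    intro m n hmn x
    exact ENNReal.rpow_le_rpow (min_le_min le_rfl (by exact_mod_cast Nat.cast_le.2 hmn)) hqpos.le
  have hsup : ∀ x, (⨆ n : ℕ, (min (f x) (n : ℝ≥0∞)) ^ q) = f x ^ q := by
    intro x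
    have h1 : (⨆ n : ℕ, min (f x) (n : ℝ≥0∞)) = f x := by
      calc (⨆ n : ℕ, min (f x) (n : ℝ≥0∞)) = f x ⊓ ⨆ n : ℕ, (n : ℝ≥0∞) := by
            rw [inf_iSup_eq]
        _ = f x := by rw [ENNReal.iSup_natCast, inf_top_eq]
    have h2 := (ENNReal.orderIsoRpow q hqpos).map_iSup
      (fun n : ℕ => min (f x) (n : ℝ≥0∞))
    simp only [ENNReal.orderIsoRpow_apply] at h2
    rw [← h2, h1]
  calc ∫⁻ x, f x ^ q ∂μ = ⨆ n : ℕ, ∫⁻ x, (min (f x) (n : ℝ≥0∞)) ^ q ∂μ := by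
        rw [← lintegral_iSup hgmq hmono]
        refine lintegral_congr fun x => (hsup x).symm
    _ ≤ ENNReal.ofReal (Real.exp (C / (p - 1))) := iSup_le hAn
end
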